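/- arXiv:1502.06359 — 3 statements merged into one kernel-verified Lean document; each statement's English description precedes it below -/
import Mathlib

section
/- Let n ≥ 3 be odd. For every vector z : Bool^{n-2} and all Boolean values x, y, w, the associativity identity holds: M_n(z₁,…,z_{n-2}, y, M_n(z₁,…,z_{n-2}, x, w)) = M_n(z₁,…,z_{n-2}, x, M_n(z₁,…,z_{n-2}, y, w)). (Axiom Ω_n.A, Associativity, proved sound over the Booleans.) -/
/-- The `n`-ary majority function on Booleans: outputs `true` iff at least
`⌈n/2⌉ = (n+1)/2` of the `n` inputs are `true`. -/
def maj (n : ℕ) (x : Fin n → Bool) : Bool :=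
  decide ((n + 1) / 2 ≤ (Finset.univ.filter fun i => x i = true).card)

lemma card_snoc (n : ℕ) (v : Fin n → Bool) (b : Bool) :
    (Finset.univ.filter fun i => (Fin.snoc v b : Fin (n+1) → Bool) i = true).card
      = (Finset.univ.filter fun i => v i = true).card + b.toNat := by
  rw [Finset.card_filter, Finset.card_filter, Fin.sum_univ_castSucc]
  simp only [Fin.snoc_castSucc, Fin.snoc_last]
  cases b <;> simp

lemma maj_snoc2 (m : ℕ) (z : Fin m → Bool) (a b : Bool) :
    maj (m + 2) (Fin.snoc (Fin.snoc z a) b)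
      = decide ((m + 3) / 2 ≤ (Finset.univ.filter fun i => z i = true).card + a.toNat + b.toNat) := by
  unfold maj
  rw [card_snoc, card_snoc]

/-- Ω_n.A (Associativity): swapping x and y between two cascaded majorities
sharing the n-2 variables z does not change the result. -/
theorem maj_assoc (m : ℕ) (hn : 3 ≤ m + 2) (hodd : Odd (m + 2))
    (z : Fin m → Bool) (x y w : Bool) :
    maj (m + 2) (Fin.snoc (Fin.snoc z y) (maj (m + 2) (Fin.snoc (Fin.snoc z x) w))) =
      maj (m + 2) (Fin.snoc (Fin.snoc z x) (maj (m + 2) (Fin.snoc (Fin.snoc z y) w))) := by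
  rw [maj_snoc2, maj_snoc2, maj_snoc2, maj_snoc2]
  generalize (Finset.univ.filter fun i => z i = true).card = c
  generalize (m + 3) / 2 = t
  rcases x <;> rcases y <;> rcases w <;>
    simp only [Bool.toNat_true, Bool.toNat_false, Nat.add_zero] <;>
    · by_cases h1 : t ≤ c <;> by_cases h2 : t ≤ c + 1 <;> by_cases h3 : t ≤ c + 1 + 1 <;>
        simp [h1, h2, h3, decide_eq_decide] <;> omega
end

section
/- Let n ≥ 3 be odd. For every x : Bool^{n-1} and every y : Bool^n, the (full) distributivity identity holds: M_n(x₁,…,x_{n-1}, M_n(y₁,…,y_n)) = M_n(M_n(x₁,…,x_{n-1},y₁), M_n(x₁,…,x_{n-1},y₂), …, M_n(x₁,…,x_{n-1},y_{n-1}), y_n). (Axiom Ω_n.D, Distributivity, proved sound over the Booleans.) -/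
lemma maj_snoc_card (m : ℕ) (x : Fin m → Bool) (b : Bool) :
    (Finset.univ.filter fun i => (Fin.snoc x b : Fin (m + 1) → Bool) i = true).card
      = (Finset.univ.filter fun i => x i = true).card + (if b then 1 else 0) := by
  rw [Finset.card_filter, Finset.card_filter, Fin.sum_univ_castSucc]
  simp

lemma maj_snoc (m : ℕ) (x : Fin m → Bool) (b : Bool) :
    maj (m + 1) (Fin.snoc x b) =
      decide ((m + 2) / 2 ≤
        (Finset.univ.filter fun i => x i = true).card + (if b then 1 else 0)) := by
  unfold maj
  rw [decide_eq_decide, maj_snoc_card]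

/-- Ω_n.D (Distributivity, full form): distributing the outer majority over the
first n-1 inner variables, leaving the last one unchanged. -/
theorem maj_distrib_full (m : ℕ) (hn : 3 ≤ m + 1) (hodd : Odd (m + 1))
    (x : Fin m → Bool) (y : Fin (m + 1) → Bool) :
    maj (m + 1) (Fin.snoc x (maj (m + 1) y)) =
      maj (m + 1)
        (Fin.snoc (fun i : Fin m => maj (m + 1) (Fin.snoc x (y i.castSucc)))
          (y (Fin.last m))) := by
  obtain ⟨r, hr⟩ := hodd
  have hm : m = 2 * r := by omega
  subst hm
  have hr1 : 1 ≤ r := by omega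
  set S := (Finset.univ.filter fun i => x i = true).card with hS
  have ht : (2 * r + 2) / 2 = r + 1 := by omega
  rcases lt_trichotomy S r with h | h | h
  · -- everything is false
    have hin : (fun i : Fin (2 * r) => maj (2 * r + 1) (Fin.snoc x (y i.castSucc)))
        = fun _ => false := by
      funext i
      rw [maj_snoc, ht, ← hS, decide_eq_false_iff_not]
      split <;> omega
    rw [hin, maj_snoc, maj_snoc, ht, ← hS]
    have hzero : (Finset.univ.filter fun _ : Fin (2 * r) => (false : Bool) = true).card = 0 := by
      simp
    rw [hzero, decide_eq_decide]
    constructor <;> intro hx <;> exfalso <;> (split at hx <;> omega)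
  · -- S = r : both sides equal maj y
    have hin : (fun i : Fin (2 * r) => maj (2 * r + 1) (Fin.snoc x (y i.castSucc)))
        = fun i => y i.castSucc := by
      funext i
      rw [maj_snoc, ht, ← hS, h]
      cases hyi : y i.castSucc <;> simp <;> omega
    rw [hin]
    have hy : (Fin.snoc (fun i : Fin (2 * r) => y i.castSucc) (y (Fin.last (2 * r)))
        : Fin (2 * r + 1) → Bool) = y := by
      funext j
      refine Fin.lastCases ?_ ?_ j
      · simp
      · intro i; simp
    rw [hy, maj_snoc, ht, ← hS, h]
    cases hmy : maj (2 * r + 1) y <;> simp <;> omega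
  · -- everything is true
    have hin : (fun i : Fin (2 * r) => maj (2 * r + 1) (Fin.snoc x (y i.castSucc)))
        = fun _ => true := by
      funext i
      rw [maj_snoc, ht, ← hS, decide_eq_true_eq]
      split <;> omega
    rw [hin, maj_snoc, maj_snoc, ht, ← hS]
    have hfull : (Finset.univ.filter fun _ : Fin (2 * r) => (true : Bool) = true).card
        = 2 * r := by simp
    rw [hfull, decide_eq_decide]
    constructor <;> intro hx <;> (split <;> omega)
end

section
/- Let n ≥ 3 be odd and let k be an integer with ⌈n/2⌉ ≤ k ≤ n-1. For every x : Bool^{n-1} and every y : Bool^n, the partial distributivity identity holds: M_n(x₁,…,x_{n-1}, M_n(y₁,…,y_n)) = M_n(M_n(x₁,…,x_{n-1},y₁), …, M_n(x₁,…,x_{n-1},y_k), y_{k+1}, …, y_n), i.e., substituting the inner majority M_n(x₁,…,x_{n-1},·) into any k ≥ ⌈n/2⌉ of the n inner variables y₁,…,y_n and leaving the remaining n-k variables unchanged yields the same Boolean function. (Axiom Ω_n.D, Distributivity, in its general form, proved sound over the Booleans.) -/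
lemma card_filter_snoc (m : ℕ) (x : Fin m → Bool) (b : Bool) :
    (Finset.univ.filter fun i : Fin (m + 1) => (Fin.snoc x b : Fin (m+1) → Bool) i = true).card
      = (Finset.univ.filter fun i => x i = true).card + (if b then 1 else 0) := by
  rw [Finset.card_filter, Finset.card_filter, Fin.sum_univ_castSucc]
  simp [Fin.snoc_castSucc, Fin.snoc_last]

lemma card_lt_fin (n k : ℕ) (hk : k ≤ n) :
    (Finset.univ.filter fun i : Fin n => (i : ℕ) < k).card = k := by
  rw [Finset.card_filter]
  rw [Fin.sum_univ_eq_sum_range (fun j => if j < k then 1 else 0)]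
  rw [← Finset.card_filter]
  have : Finset.filter (fun i => i < k) (Finset.range n) = Finset.range k := by
    ext i; simp; omega
  rw [this, Finset.card_range]

/-- Ω_n.D (Distributivity, general form): substituting the inner majority into any
k ≥ ⌈n/2⌉ of the n inner variables (k ≤ n-1), leaving the rest unchanged, yields
the same function. -/
theorem maj_distrib_partial (m : ℕ) (hn : 3 ≤ m + 1) (hodd : Odd (m + 1))
    (k : ℕ) (hk1 : (m + 1 + 1) / 2 ≤ k) (hk2 : k ≤ m)
    (x : Fin m → Bool) (y : Fin (m + 1) → Bool) :
    maj (m + 1) (Fin.snoc x (maj (m + 1) y)) =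
      maj (m + 1)
        (fun i => if (i : ℕ) < k then maj (m + 1) (Fin.snoc x (y i)) else y i) := by
  have hmeven : ∃ a, m = 2 * a := by
    rcases hodd with ⟨a, ha⟩; exact ⟨a, by omega⟩
  set t := (m + 1 + 1) / 2 with ht
  set c := (Finset.univ.filter fun i => x i = true).card with hc
  have hmaj : ∀ b : Bool, maj (m+1) (Fin.snoc x b) = decide (t ≤ c + if b then 1 else 0) := by
    intro b; unfold maj; rw [card_filter_snoc, ← ht, ← hc]
  have hm2t : m + 2 = 2 * t := by rcases hmeven with ⟨a, ha⟩; omega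
  rcases lt_trichotomy (c+1) t with h | h | h
  · -- inner maj is constantly false
    have hf : ∀ b, maj (m+1) (Fin.snoc x b) = false := by
      intro b; rw [hmaj]; cases b <;> simp <;> omega
    rw [hf]
    have hcount : (Finset.univ.filter fun i : Fin (m+1) =>
        (if (i:ℕ) < k then maj (m+1) (Fin.snoc x (y i)) else y i) = true).card ≤ m + 1 - k := by
      have hsub : (Finset.univ.filter fun i : Fin (m+1) =>
          (if (i:ℕ) < k then maj (m+1) (Fin.snoc x (y i)) else y i) = true)
          ⊆ (Finset.univ.filter fun i : Fin (m+1) => ¬ ((i:ℕ) < k)) := by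
        intro i hi
        simp only [Finset.mem_filter, Finset.mem_univ, true_and] at *
        intro hik
        rw [if_pos hik, hf] at hi
        exact Bool.false_ne_true hi
      have h2 : (Finset.univ.filter fun i : Fin (m+1) => ¬ ((i:ℕ) < k)).card = m + 1 - k := by
        have h3 := Finset.card_filter_add_card_filter_not
          (s := (Finset.univ : Finset (Fin (m+1)))) (p := fun i : Fin (m+1) => (i:ℕ) < k)
        rw [card_lt_fin (m+1) k (by omega), Finset.card_univ, Fintype.card_fin] at h3
        omega
      calc _ ≤ _ := Finset.card_le_card hsub
        _ = m + 1 - k := h2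
    unfold maj at hcount ⊢
    beta_reduce
    symm
    apply decide_eq_false
    omega
  · -- inner maj is the identity
    have hf : ∀ b, maj (m+1) (Fin.snoc x b) = b := by
      intro b; rw [hmaj]; cases b <;> simp <;> omega
    rw [hf]
    congr 1
    funext i
    split
    · rw [hf]
    · rfl
  · -- inner maj is constantly true
    have hf : ∀ b, maj (m+1) (Fin.snoc x b) = true := by
      intro b; rw [hmaj]; cases b <;> simp <;> omega
    rw [hf]
    have hcount : k ≤ (Finset.univ.filter fun i : Fin (m+1) =>
        (if (i:ℕ) < k then maj (m+1) (Fin.snoc x (y i)) else y i) = true).card := by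
      have hsub : (Finset.univ.filter fun i : Fin (m+1) => (i:ℕ) < k)
          ⊆ (Finset.univ.filter fun i : Fin (m+1) =>
          (if (i:ℕ) < k then maj (m+1) (Fin.snoc x (y i)) else y i) = true) := by
        intro i hi
        simp only [Finset.mem_filter, Finset.mem_univ, true_and] at *
        rw [if_pos hi, hf]
      calc k = _ := (card_lt_fin (m+1) k (by omega)).symm
        _ ≤ _ := Finset.card_le_card hsub
    unfold maj at hcount ⊢
    beta_reduce
    symm
    apply decide_eq_true
    omega
end
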